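/- arXiv:2601.11274 — 3 statements merged into one kernel-verified Lean document; each statement's English description precedes it below -/
import Mathlib

section
/- Let ν be a parametric b-measure on ℝ^N with respect to a non-decreasing family of moduli of continuity {ω_j}_{j≥1}, and let y : [a,b] → ℝ^N be continuous. Then for every ε > 0 there exists δ(ε) > 0 such that for every partition a = t₁ < t₂ < ⋯ < t_k = b of [a,b] and all points τ_i, τ̃_i ∈ [a,b] (1 ≤ i ≤ k−1) with |τ_i − τ̃_i| < δ(ε), one has |Σ_{i=1}^{k−1} (ν_{y(τ_i)} − ν_{y(τ̃_i)})([t_i, t_{i+1}])| < ε. -/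
open MeasureTheory Set Filter Topology

/-- A (continuous real) b-measure: a set function on the bounded Borel subsets of `ℝ`
which vanishes on `∅`, is countably additive over countable pairwise disjoint families
of bounded Borel sets with bounded union, and vanishes on singletons. -/
structure IsBMeasure (μ : Set ℝ → ℝ) : Prop where
  empty : μ ∅ = 0
  countably_additive : ∀ A : ℕ → Set ℝ, (∀ n, MeasurableSet (A n)) →
    (∀ n, Bornology.IsBounded (A n)) → Pairwise (Function.onFun Disjoint A) →
    Bornology.IsBounded (⋃ n, A n) →
    HasSum (fun n => μ (A n)) (μ (⋃ n, A n))
  singleton : ∀ t : ℝ, μ {t} = 0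

/-- A locally finite atomless Borel measure on `ℝ`. -/
def GoodMeasure (m : Measure ℝ) : Prop :=
  IsLocallyFiniteMeasure m ∧ ∀ t : ℝ, m {t} = 0

/-- `P` is a finite Borel partition of `A`. -/
def IsBorelPartition (A : Set ℝ) {n : ℕ} (P : Fin n → Set ℝ) : Prop :=
  (∀ i, MeasurableSet (P i)) ∧ Pairwise (Function.onFun Disjoint P) ∧ (⋃ i, P i) = A

/-- `|μ| ≤ m` : total-variation bound of the set function `μ` by the measure `m`,
expressed through finite Borel partitions of bounded Borel sets. -/
def TVLE (μ : Set ℝ → ℝ) (m : Measure ℝ) : Prop :=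
  ∀ A : Set ℝ, Bornology.IsBounded A → MeasurableSet A →
    ∀ (n : ℕ) (P : Fin n → Set ℝ), IsBorelPartition A P →
      ∑ i, |μ (P i)| ≤ (m A).toReal

/-- Partition-sum bound `Σ |μ₁(Aᵢ) - μ₂(Aᵢ)| ≤ c · l(A)` for the difference of two
set functions, over finite Borel partitions of bounded Borel sets. -/
def DiffLE (μ₁ μ₂ : Set ℝ → ℝ) (c : ℝ) (l : Measure ℝ) : Prop :=
  ∀ A : Set ℝ, Bornology.IsBounded A → MeasurableSet A →
    ∀ (n : ℕ) (P : Fin n → Set ℝ), IsBorelPartition A P →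
      ∑ i, |μ₁ (P i) - μ₂ (P i)| ≤ c * (l A).toReal

variable {E : Type*} [NormedAddCommGroup E]

/-- `m` is an m-bound of `ν` on the closed ball of radius `j`. -/
def HasMBound (ν : E → Set ℝ → ℝ) (j : ℕ) (m : Measure ℝ) : Prop :=
  GoodMeasure m ∧ ∀ y : E, ‖y‖ ≤ (j : ℝ) → TVLE (ν y) m

/-- `l` is an l-bound of `ν` on the closed ball of radius `j`, for the modulus `ω`. -/
def HasLBound (ω : ℝ → ℝ) (ν : E → Set ℝ → ℝ) (j : ℕ) (l : Measure ℝ) : Prop :=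
  GoodMeasure l ∧ ∀ y₁ y₂ : E, ‖y₁‖ ≤ (j : ℝ) → ‖y₂‖ ≤ (j : ℝ) →
    DiffLE (ν y₁) (ν y₂) (ω ‖y₁ - y₂‖) l

/-- A non-decreasing family of moduli of continuity `{ω_j}`. -/
structure IsModulusFamily (ω : ℕ → ℝ → ℝ) : Prop where
  continuousOn : ∀ j, ContinuousOn (ω j) (Ici 0)
  monotoneOn : ∀ j, MonotoneOn (ω j) (Ici 0)
  map_zero : ∀ j, ω j 0 = 0
  nonneg : ∀ j x, 0 ≤ x → 0 ≤ ω j x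
  mono_index : ∀ j x, 0 ≤ x → ω j x ≤ ω (j + 1) x

/-- A parametric b-measure on `E` with respect to the family of moduli `ω`. -/
def IsParamBMeasure (ω : ℕ → ℝ → ℝ) (ν : E → Set ℝ → ℝ) : Prop :=
  (∀ y, IsBMeasure (ν y)) ∧
    ∀ j : ℕ, 1 ≤ j → ∃ m l : Measure ℝ, HasMBound ν j m ∧ HasLBound (ω j) ν j l

/-- A tagged partition of `[a,b]`. -/
structure TaggedPartition (a b : ℝ) where
  k : ℕ
  k_pos : 0 < k
  t : ℕ → ℝ
  tag : ℕ → ℝ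
  left : t 0 = a
  right : t k = b
  lt : ∀ i < k, t i < t (i + 1)
  tag_mem : ∀ i < k, tag i ∈ Set.Icc (t i) (t (i + 1))

/-- The mesh of the tagged partition is `< δ`. -/
def TaggedPartition.MeshLT {a b : ℝ} (P : TaggedPartition a b) (δ : ℝ) : Prop :=
  ∀ i < P.k, P.t (i + 1) - P.t i < δ

/-- The Riemann sum of the parametric b-measure `ν` along the curve `y` over the
tagged partition `P`. -/
def RiemannSum (ν : E → Set ℝ → ℝ) (y : ℝ → E) {a b : ℝ} (P : TaggedPartition a b) : ℝ :=
  ∑ i ∈ Finset.range P.k, ν (y (P.tag i)) (Set.Icc (P.t i) (P.t (i + 1)))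

/-- `L = ∫_a^b dν_{y(s)}` : `L` is the limit of the Riemann sums of `ν` along `y`
over tagged partitions of `[a,b]` as the mesh tends to `0`. -/
def IsCurveIntegral (ν : E → Set ℝ → ℝ) (y : ℝ → E) (a b : ℝ) (L : ℝ) : Prop :=
  ∀ ε > 0, ∃ δ > 0, ∀ P : TaggedPartition a b, P.MeshLT δ → |L - RiemannSum ν y P| < ε

/-- A suitable set of moduli of continuity `Θ = {θ_j^{[q₁,q₂]}}`. -/
structure IsSuitableModuli (Θ : ℕ → ℚ → ℚ → ℝ → ℝ) : Prop where
  continuousOn : ∀ (j : ℕ) (q₁ q₂ : ℚ), q₁ < q₂ → ContinuousOn (Θ j q₁ q₂) (Ici 0)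
  monotoneOn : ∀ (j : ℕ) (q₁ q₂ : ℚ), q₁ < q₂ → MonotoneOn (Θ j q₁ q₂) (Ici 0)
  map_zero : ∀ (j : ℕ) (q₁ q₂ : ℚ), q₁ < q₂ → Θ j q₁ q₂ 0 = 0
  nonneg : ∀ (j : ℕ) (q₁ q₂ : ℚ) (x : ℝ), q₁ < q₂ → 0 ≤ x → 0 ≤ Θ j q₁ q₂ x
  mono : ∀ (j₁ j₂ : ℕ) (q₁ q₂ p₁ p₂ : ℚ), j₁ ≤ j₂ → q₁ ≤ p₁ → p₁ < p₂ → p₂ ≤ q₂ →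
    ∀ x : ℝ, 0 ≤ x → Θ j₁ p₁ p₂ x ≤ Θ j₂ q₁ q₂ x

/-- The set `𝒦_j^I` of continuous functions `y : I → E`, `I = [q₁,q₂]`, bounded by `j`
and admitting `θ_j^I` as modulus of continuity. -/
def KSet (E : Type*) [NormedAddCommGroup E] (Θ : ℕ → ℚ → ℚ → ℝ → ℝ)
    (j : ℕ) (q₁ q₂ : ℚ) : Set (ℝ → E) :=
  {y | ContinuousOn y (Set.Icc (q₁ : ℝ) (q₂ : ℝ)) ∧
    (∀ t ∈ Set.Icc (q₁ : ℝ) (q₂ : ℝ), ‖y t‖ ≤ (j : ℝ)) ∧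
    ∀ t₁ ∈ Set.Icc (q₁ : ℝ) (q₂ : ℝ), ∀ t₂ ∈ Set.Icc (q₁ : ℝ) (q₂ : ℝ),
      ‖y t₁ - y t₂‖ ≤ Θ j q₁ q₂ |t₁ - t₂|}

/-- Convergence `ν_n → ν₀` in the topology `σ_Θ` : the integrals along curves of
`𝒦_j^I` converge uniformly, for every `j` and every compact interval `I` with
rational endpoints. -/
def SigmaThetaTendsto {E : Type*} [NormedAddCommGroup E] (Θ : ℕ → ℚ → ℚ → ℝ → ℝ)
    (ν : ℕ → E → Set ℝ → ℝ) (ν₀ : E → Set ℝ → ℝ) : Prop :=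
  ∀ (j : ℕ) (q₁ q₂ : ℚ), q₁ < q₂ → ∀ ε > 0, ∃ n₀ : ℕ, ∀ n ≥ n₀,
    ∀ y ∈ KSet E Θ j q₁ q₂, ∀ L L₀ : ℝ,
      IsCurveIntegral (ν n) y (q₁ : ℝ) (q₂ : ℝ) L →
      IsCurveIntegral ν₀ y (q₁ : ℝ) (q₂ : ℝ) L₀ → |L - L₀| < ε

/-- The time-translate `ν·t` of a parametric b-measure: `(ν·t)_y(A) = ν_y(A + t)`. -/
def BTranslate (ν : E → Set ℝ → ℝ) (t : ℝ) : E → Set ℝ → ℝ :=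
  fun y A => ν y ((fun s => s + t) '' A)

/-- The time-translate `m·t` of a Borel measure: `(m·t)(A) = m(A + t)`. -/
noncomputable def MTranslate (m : Measure ℝ) (t : ℝ) : Measure ℝ :=
  Measure.map (fun s => s - t) m

/-- An N-dimensional parametric b-measure on `E` with common m-bounds `m j` and
common Lipschitz l-bounds `l j`. -/
def IsNDimParamBMeasure {M : ℕ} (νbar : Fin M → E → Set ℝ → ℝ)
    (m l : ℕ → Measure ℝ) : Prop :=
  (∀ i y, IsBMeasure (νbar i y)) ∧
    ∀ j : ℕ, 1 ≤ j → GoodMeasure (m j) ∧ GoodMeasure (l j) ∧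
      (∀ i, ∀ y : E, ‖y‖ ≤ (j : ℝ) → TVLE (νbar i y) (m j)) ∧
      (∀ i, ∀ y₁ y₂ : E, ‖y₁‖ ≤ (j : ℝ) → ‖y₂‖ ≤ (j : ℝ) →
        DiffLE (νbar i y₁) (νbar i y₂) ‖y₁ - y₂‖ (l j))

/-- The oriented curve integral: `∫_b^a := -∫_a^b`. -/
def IsSignedCurveIntegral (ν : E → Set ℝ → ℝ) (y : ℝ → E) (a b : ℝ) (L : ℝ) : Prop :=
  (a ≤ b ∧ IsCurveIntegral ν y a b L) ∨ (b < a ∧ IsCurveIntegral ν y b a (-L))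

/-- `y` is a solution on `S` of the Cauchy problem `y' = ν̄_y`, `y(t₀) = y₀`, for the
N-dimensional parametric b-measure `ν̄`: componentwise,
`y_i(t) = y_{0,i} + ∫_{t₀}^t dν^i_{y(s)}`. -/
def IsSolutionOn {M : ℕ} (νbar : Fin M → EuclideanSpace ℝ (Fin M) → Set ℝ → ℝ)
    (t₀ : ℝ) (y₀ : EuclideanSpace ℝ (Fin M)) (S : Set ℝ)
    (y : ℝ → EuclideanSpace ℝ (Fin M)) : Prop :=
  t₀ ∈ S ∧ y t₀ = y₀ ∧ ContinuousOn y S ∧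
    ∀ t ∈ S, ∀ i : Fin M, IsSignedCurveIntegral (νbar i) y t₀ t (y t i - y₀ i)

/-- `y` is the maximal (noncontinuable) solution, defined on the open interval `S`:
every solution on an interval containing `t₀` is a restriction of `y`. -/
def IsMaximalSolution {M : ℕ} (νbar : Fin M → EuclideanSpace ℝ (Fin M) → Set ℝ → ℝ)
    (t₀ : ℝ) (y₀ : EuclideanSpace ℝ (Fin M)) (S : Set ℝ)
    (y : ℝ → EuclideanSpace ℝ (Fin M)) : Prop :=
  IsSolutionOn νbar t₀ y₀ S y ∧ IsOpen S ∧ S.OrdConnected ∧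
    ∀ S' : Set ℝ, S'.OrdConnected → ∀ z, IsSolutionOn νbar t₀ y₀ S' z →
      S' ⊆ S ∧ Set.EqOn z y S'


theorem stmt0 {N : ℕ} (ω : ℕ → ℝ → ℝ) (hω : IsModulusFamily ω)
    (ν : EuclideanSpace ℝ (Fin N) → Set ℝ → ℝ) (hν : IsParamBMeasure ω ν)
    (a b : ℝ) (hab : a ≤ b) (y : ℝ → EuclideanSpace ℝ (Fin N))
    (hy : ContinuousOn y (Set.Icc a b)) :
    ∀ ε > 0, ∃ δ > 0, ∀ k : ℕ, 0 < k → ∀ t : ℕ → ℝ, t 0 = a → t k = b →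
      (∀ i < k, t i < t (i + 1)) →
      ∀ τ τ' : ℕ → ℝ, (∀ i < k, τ i ∈ Set.Icc a b) → (∀ i < k, τ' i ∈ Set.Icc a b) →
        (∀ i < k, |τ i - τ' i| < δ) →
        |∑ i ∈ Finset.range k,
            (ν (y (τ i)) (Set.Icc (t i) (t (i + 1))) -
              ν (y (τ' i)) (Set.Icc (t i) (t (i + 1))))| < ε := by
  intro ε hε
  have hcomp : IsCompact (Set.Icc a b) := isCompact_Icc
  obtain ⟨R, hR⟩ := hcomp.exists_bound_of_continuousOn hy
  obtain ⟨j0, hj0⟩ := exists_nat_ge R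
  set j : ℕ := max j0 1 with hjdef
  have hj1 : 1 ≤ j := le_max_right _ _
  have hyj : ∀ s ∈ Set.Icc a b, ‖y s‖ ≤ (j : ℝ) := by
    intro s hs
    refine (hR s hs).trans (hj0.trans ?_)
    exact_mod_cast Nat.le_max_left j0 1
  obtain ⟨m, l, hm, hl⟩ := hν.2 j hj1
  haveI : IsLocallyFiniteMeasure l := hl.1.1
  have hsing : ∀ s : ℝ, l {s} = 0 := hl.1.2
  set C : ℝ := (l (Set.Icc a b)).toReal with hCdef
  have hCfin : l (Set.Icc a b) ≠ ⊤ := hcomp.measure_lt_top.ne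
  have hC0 : 0 ≤ C := ENNReal.toReal_nonneg
  have hε' : 0 < ε / (C + 1) := div_pos hε (by linarith)
  -- continuity of ω j at 0 within Ici 0
  have hcont : ContinuousWithinAt (ω j) (Set.Ici 0) 0 :=
    hω.continuousOn j 0 Set.self_mem_Ici
  rw [Metric.continuousWithinAt_iff] at hcont
  obtain ⟨η, hη, hηω⟩ := hcont (ε / (C + 1)) hε'
  have hωsmall : ∀ x : ℝ, 0 ≤ x → x < η → ω j x < ε / (C + 1) := by
    intro x hx hxη
    have := hηω (Set.mem_Ici.mpr hx) (by
      rw [Real.dist_eq, sub_zero, abs_of_nonneg hx]; exact hxη)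
    rw [Real.dist_eq, hω.map_zero j, sub_zero] at this
    calc ω j x ≤ |ω j x| := le_abs_self _
      _ < ε / (C + 1) := this
  -- uniform continuity of y on [a,b]
  have huc := hcomp.uniformContinuousOn_of_continuous hy
  rw [Metric.uniformContinuousOn_iff] at huc
  obtain ⟨δ, hδ, hδy⟩ := huc η hη
  refine ⟨δ, hδ, ?_⟩
  intro k hk t ht0 htk hlt τ τ' hτ hτ' hττ'
  have hmono : ∀ p q : ℕ, p ≤ q → q ≤ k → t p ≤ t q := by
    intro p q hpq hq
    induction q with
    | zero => simp [Nat.le_zero.mp hpq]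
    | succ n ih =>
      rcases Nat.lt_or_ge p (n + 1) with h | h
      · exact (ih (Nat.lt_succ_iff.mp h) ((Nat.le_succ n).trans hq)).trans
          (hlt n (Nat.lt_of_succ_le hq)).le
      · have : p = n + 1 := le_antisymm hpq h
        simp [this]
  -- l(Icc) = l(Ico)
  have hIccIco : ∀ i < k, l (Set.Icc (t i) (t (i + 1))) = l (Set.Ico (t i) (t (i + 1))) := by
    intro i hi
    apply le_antisymm
    · calc l (Set.Icc (t i) (t (i + 1)))
          = l (Set.Ico (t i) (t (i + 1)) ∪ {t (i + 1)}) := by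
            rw [Set.Ico_union_right (hlt i hi).le]
        _ ≤ l (Set.Ico (t i) (t (i + 1))) + l {t (i + 1)} := measure_union_le _ _
        _ = l (Set.Ico (t i) (t (i + 1))) := by rw [hsing]; simp
    · exact measure_mono Set.Ico_subset_Icc_self
  -- per-term bound
  have hterm : ∀ i ∈ Finset.range k,
      |ν (y (τ i)) (Set.Icc (t i) (t (i + 1))) - ν (y (τ' i)) (Set.Icc (t i) (t (i + 1)))|
        ≤ (ε / (C + 1)) * (l (Set.Ico (t i) (t (i + 1)))).toReal := by
    intro i hi
    rw [Finset.mem_range] at hi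
    have hdiff := hl.2 (y (τ i)) (y (τ' i)) (hyj _ (hτ i hi)) (hyj _ (hτ' i hi))
      (Set.Icc (t i) (t (i + 1))) (Metric.isBounded_Icc _ _) measurableSet_Icc 1
      (fun _ => Set.Icc (t i) (t (i + 1)))
      ⟨fun _ => measurableSet_Icc, Subsingleton.pairwise, Set.iUnion_const _⟩
    rw [Fin.sum_univ_one] at hdiff
    have hnorm : ‖y (τ i) - y (τ' i)‖ < η := by
      have := hδy (τ i) (hτ i hi) (τ' i) (hτ' i hi) (by
        rw [Real.dist_eq]; exact hττ' i hi)
      rwa [dist_eq_norm] at this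
    have hωlt : ω j ‖y (τ i) - y (τ' i)‖ < ε / (C + 1) :=
      hωsmall _ (norm_nonneg _) hnorm
    calc |ν (y (τ i)) (Set.Icc (t i) (t (i + 1))) - ν (y (τ' i)) (Set.Icc (t i) (t (i + 1)))|
        ≤ ω j ‖y (τ i) - y (τ' i)‖ * (l (Set.Icc (t i) (t (i + 1)))).toReal := hdiff
      _ ≤ (ε / (C + 1)) * (l (Set.Icc (t i) (t (i + 1)))).toReal :=
          mul_le_mul_of_nonneg_right hωlt.le ENNReal.toReal_nonneg
      _ = (ε / (C + 1)) * (l (Set.Ico (t i) (t (i + 1)))).toReal := by rw [hIccIco i hi]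
  -- sum of interval measures
  have hkey : ∀ p q : ℕ, p < q → q < k →
      Disjoint (Set.Ico (t p) (t (p + 1))) (Set.Ico (t q) (t (q + 1))) := by
    intro p q hpq hq
    apply Set.disjoint_left.mpr
    intro x hx hx'
    have h1 : x < t (p + 1) := hx.2
    have h2 : t q ≤ x := hx'.1
    have h3 : t (p + 1) ≤ t q := hmono _ _ (Nat.succ_le_of_lt hpq) hq.le
    linarith
  have hdisj : (↑(Finset.range k) : Set ℕ).PairwiseDisjoint
      (fun i => Set.Ico (t i) (t (i + 1))) := by
    intro p hp q hq hpq
    rcases lt_or_gt_of_ne hpq with h | h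
    · exact hkey p q h (Finset.mem_range.mp (Finset.mem_coe.mp hq))
    · exact (hkey q p h (Finset.mem_range.mp (Finset.mem_coe.mp hp))).symm
  have hunion : l (⋃ i ∈ Finset.range k, Set.Ico (t i) (t (i + 1)))
      = ∑ i ∈ Finset.range k, l (Set.Ico (t i) (t (i + 1))) :=
    measure_biUnion_finset hdisj (fun i _ => measurableSet_Ico)
  have hsub : (⋃ i ∈ Finset.range k, Set.Ico (t i) (t (i + 1))) ⊆ Set.Icc a b := by
    intro x hx
    simp only [Set.mem_iUnion, Finset.mem_range, Set.mem_Ico] at hx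
    obtain ⟨i, hi, hx1, hx2⟩ := hx
    constructor
    · calc a = t 0 := ht0.symm
        _ ≤ t i := hmono _ _ (Nat.zero_le i) hi.le
        _ ≤ x := hx1
    · calc x ≤ t (i + 1) := hx2.le
        _ ≤ t k := hmono _ _ hi (le_refl k)
        _ = b := htk
  have hsumle : ∑ i ∈ Finset.range k, l (Set.Ico (t i) (t (i + 1))) ≤ l (Set.Icc a b) := by
    rw [← hunion]; exact measure_mono hsub
  have hsumfin : ∀ i ∈ Finset.range k, l (Set.Ico (t i) (t (i + 1))) ≠ ⊤ := by
    intro i hi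
    exact (lt_of_le_of_lt (le_trans (Finset.single_le_sum (fun _ _ => zero_le) hi) hsumle)
      hCfin.lt_top).ne
  have hsumreal : ∑ i ∈ Finset.range k, (l (Set.Ico (t i) (t (i + 1)))).toReal ≤ C := by
    rw [← ENNReal.toReal_sum hsumfin]
    exact ENNReal.toReal_mono hCfin hsumle
  calc |∑ i ∈ Finset.range k,
        (ν (y (τ i)) (Set.Icc (t i) (t (i + 1))) - ν (y (τ' i)) (Set.Icc (t i) (t (i + 1))))|
      ≤ ∑ i ∈ Finset.range k,
        |ν (y (τ i)) (Set.Icc (t i) (t (i + 1))) - ν (y (τ' i)) (Set.Icc (t i) (t (i + 1)))| :=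
        Finset.abs_sum_le_sum_abs _ _
    _ ≤ ∑ i ∈ Finset.range k, (ε / (C + 1)) * (l (Set.Ico (t i) (t (i + 1)))).toReal :=
        Finset.sum_le_sum hterm
    _ = (ε / (C + 1)) * ∑ i ∈ Finset.range k, (l (Set.Ico (t i) (t (i + 1)))).toReal := by
        rw [Finset.mul_sum]
    _ ≤ (ε / (C + 1)) * C := mul_le_mul_of_nonneg_left hsumreal hε'.le
    _ < (ε / (C + 1)) * (C + 1) := by
        exact mul_lt_mul_of_pos_left (lt_add_one C) hε'
    _ = ε := div_mul_cancel₀ ε (by linarith)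
end

section
/- Every parametric b-measure ν on ℝ^N is integrable along every continuous curve y : [a,b] → ℝ^N; that is, there exists L ∈ ℝ such that for every ε > 0 there is δ(ε) > 0 with |L − S_ν^y(Δ)| < ε for every tagged δ(ε)-partition Δ of [a,b]. -/
open MeasureTheory Set Filter Topology

variable {E : Type*} [NormedAddCommGroup E]

section AuxiliaryLemmas

lemma chain_mono3 {α : Type*} [Preorder α] (r : ℕ → α) (u v : ℕ) (huv : u ≤ v)
    (hm : ∀ m, u ≤ m → m < v → r m ≤ r (m + 1)) : r u ≤ r v := by
  induction v, huv using Nat.le_induction with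
  | base => exact le_refl _
  | succ w hw ih =>
      exact le_trans (ih (fun m h1 h2 => hm m h1 (Nat.lt_succ_of_lt h2)))
        (hm w hw (Nat.lt_succ_self w))

lemma telescope_aux (g : ℝ → ℝ → ℝ) (hzero : ∀ x, g x x = 0)
    (hadd : ∀ s r u : ℝ, s ≤ r → r ≤ u → g s u = g s r + g r u)
    (r : ℕ → ℝ) (u v : ℕ) (huv : u ≤ v)
    (hm : ∀ m, u ≤ m → m < v → r m ≤ r (m + 1)) :
    g (r u) (r v) = ∑ m ∈ Finset.Ico u v, g (r m) (r (m + 1)) := by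
  induction v, huv using Nat.le_induction with
  | base => simp [hzero]
  | succ w hw ih =>
      have hm' : ∀ m, u ≤ m → m < w → r m ≤ r (m + 1) :=
        fun m h1 h2 => hm m h1 (Nat.lt_succ_of_lt h2)
      have hruw : r u ≤ r w := chain_mono3 r u w hw hm'
      rw [hadd (r u) (r w) (r (w + 1)) hruw (hm w hw (Nat.lt_succ_self w)),
        ih hm', Finset.sum_Ico_succ_top hw]

lemma sum_concat (f : ℕ → ℝ) (ψ : ℕ → ℕ) (k : ℕ) (hψ : ∀ i < k, ψ i ≤ ψ (i + 1)) :
    ∑ i ∈ Finset.range k, ∑ m ∈ Finset.Ico (ψ i) (ψ (i + 1)), f m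
      = ∑ m ∈ Finset.Ico (ψ 0) (ψ k), f m := by
  induction k with
  | zero => simp
  | succ w ih =>
      rw [Finset.sum_range_succ, ih (fun i hi => hψ i (Nat.lt_succ_of_lt hi)),
        Finset.sum_Ico_consecutive]
      · exact chain_mono3 ψ 0 w (Nat.zero_le w) (fun m _ h2 => hψ m (Nat.lt_succ_of_lt h2))
      · exact hψ w (Nat.lt_succ_self w)

lemma IsBMeasure.union2 {μ : Set ℝ → ℝ} (h : IsBMeasure μ) {A B : Set ℝ}
    (mA : MeasurableSet A) (mB : MeasurableSet B)
    (bA : Bornology.IsBounded A) (bB : Bornology.IsBounded B)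
    (hd : Disjoint A B) : μ (A ∪ B) = μ A + μ B := by
  set F : ℕ → Set ℝ := fun n => if n = 0 then A else if n = 1 then B else ∅ with hF
  have hU : (⋃ n, F n) = A ∪ B := by
    apply subset_antisymm
    · apply Set.iUnion_subset; intro n
      rcases n with _|_|n <;> simp [F]
    · intro x hx
      rcases hx with hx | hx
      · exact Set.mem_iUnion.2 ⟨0, by simpa [F] using hx⟩
      · exact Set.mem_iUnion.2 ⟨1, by simpa [F] using hx⟩
  have hs := h.countably_additive F
    (by intro n; rcases n with _|_|n <;> simp [F, mA, mB])
    (by intro n; rcases n with _|_|n <;> simp [F, bA, bB])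
    (by
      intro i j hij
      rcases i with _|_|i <;> rcases j with _|_|j <;>
        simp_all [F, Function.onFun, hd, hd.symm])
    (by rw [hU]; exact bA.union bB)
  rw [hU] at hs
  have hzero : ∀ n ∉ ({0, 1} : Finset ℕ), F n = ∅ := by
    intro n hn; rcases n with _|_|n <;> simp_all [F]
  have hs2 : HasSum (fun n => μ (F n)) (∑ n ∈ ({0, 1} : Finset ℕ), μ (F n)) := by
    apply hasSum_sum_of_ne_finset_zero
    intro n hn; rw [hzero n hn, h.empty]
  have := hs.unique hs2
  rw [this]; simp [F]

lemma IsBMeasure.icc_ioc {μ : Set ℝ → ℝ} (h : IsBMeasure μ) {r u : ℝ} (hru : r ≤ u) :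
    μ (Icc r u) = μ (Ioc r u) := by
  have hu : ({r} : Set ℝ) ∪ Ioc r u = Icc r u := by
    ext x; simp only [Set.mem_union, Set.mem_singleton_iff, Set.mem_Ioc, Set.mem_Icc]
    constructor
    · rintro (rfl | ⟨h1, h2⟩) <;> constructor <;> linarith
    · rintro ⟨h1, h2⟩
      rcases eq_or_lt_of_le h1 with rfl | h1
      · exact Or.inl rfl
      · exact Or.inr ⟨h1, h2⟩
  have := h.union2 (A := {r}) (B := Ioc r u) (measurableSet_singleton r)
    measurableSet_Ioc Bornology.isBounded_singleton (Metric.isBounded_Ioc _ _)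
    (by apply Set.disjoint_left.2; rintro x rfl ⟨h1, _⟩; exact absurd h1 (lt_irrefl _))
  rw [hu] at this
  rw [this, h.singleton]; ring

lemma IsBMeasure.icc_zero {μ : Set ℝ → ℝ} (h : IsBMeasure μ) (x : ℝ) :
    μ (Set.Icc x x) = 0 := by
  rw [Set.Icc_self, h.singleton]

lemma IsBMeasure.icc_add {μ : Set ℝ → ℝ} (h : IsBMeasure μ) {s r u : ℝ}
    (h1 : s ≤ r) (h2 : r ≤ u) : μ (Icc s u) = μ (Icc s r) + μ (Icc r u) := by
  have hu : Icc s r ∪ Ioc r u = Icc s u := Set.Icc_union_Ioc_eq_Icc h1 h2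
  have := h.union2 (A := Icc s r) (B := Ioc r u) measurableSet_Icc measurableSet_Ioc
    (Metric.isBounded_Icc _ _) (Metric.isBounded_Ioc _ _)
    (by apply Set.disjoint_left.2; rintro x ⟨_, hb⟩ ⟨hc, _⟩; linarith)
  rw [hu] at this
  rw [this, h.icc_ioc h2]

lemma good_fin {l : Measure ℝ} (h : GoodMeasure l) (c d : ℝ) : l (Icc c d) ≠ ⊤ := by
  haveI := h.1
  exact (isCompact_Icc.measure_lt_top).ne

lemma good_icc_ioc {l : Measure ℝ} (h : GoodMeasure l) {r u : ℝ} :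
    l (Icc r u) = l (Ioc r u) := by
  apply le_antisymm
  · calc l (Icc r u) ≤ l (Ioc r u ∪ {r}) := measure_mono (by
        intro x hx
        rcases eq_or_lt_of_le hx.1 with rfl | h1
        · exact Or.inr rfl
        · exact Or.inl ⟨h1, hx.2⟩)
      _ ≤ l (Ioc r u) + l {r} := measure_union_le _ _
      _ = l (Ioc r u) := by rw [h.2]; simp
  · exact measure_mono Set.Ioc_subset_Icc_self

lemma good_zero {l : Measure ℝ} (h : GoodMeasure l) (x : ℝ) : (l (Icc x x)).toReal = 0 := by
  rw [Set.Icc_self, h.2]; simp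

lemma good_add {l : Measure ℝ} (h : GoodMeasure l) {s r u : ℝ} (h1 : s ≤ r) (h2 : r ≤ u) :
    (l (Icc s u)).toReal = (l (Icc s r)).toReal + (l (Icc r u)).toReal := by
  have hd : Disjoint (Icc s r) (Ioc r u) := by
    apply Set.disjoint_left.2; rintro x ⟨_, hb⟩ ⟨hc, _⟩; linarith
  have : l (Icc s u) = l (Icc s r) + l (Ioc r u) := by
    rw [← Set.Icc_union_Ioc_eq_Icc h1 h2, measure_union hd measurableSet_Ioc]
  rw [this, ← good_icc_ioc h, ENNReal.toReal_add (good_fin h _ _) (good_fin h _ _)]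

lemma diff_single {μ₁ μ₂ : Set ℝ → ℝ} {c : ℝ} {l : Measure ℝ} (h : DiffLE μ₁ μ₂ c l)
    {A : Set ℝ} (hb : Bornology.IsBounded A) (hm : MeasurableSet A) :
    |μ₁ A - μ₂ A| ≤ c * (l A).toReal := by
  have := h A hb hm 1 (fun _ => A)
    ⟨fun _ => hm, fun i j hij => absurd (Subsingleton.elim i j) hij, Set.iUnion_const A⟩
  simpa using this

lemma TaggedPartition.t_mono {a b : ℝ} (P : TaggedPartition a b) {u v : ℕ}
    (huv : u ≤ v) (hv : v ≤ P.k) : P.t u ≤ P.t v :=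
  chain_mono3 P.t u v huv (fun m _ h2 => (P.lt m (lt_of_lt_of_le h2 hv)).le)

lemma TaggedPartition.t_mem {a b : ℝ} (P : TaggedPartition a b) {i : ℕ}
    (hi : i ≤ P.k) : P.t i ∈ Icc a b := by
  have h1 := P.t_mono (Nat.zero_le i) hi
  have h2 := P.t_mono hi (le_refl P.k)
  have h3 := P.left
  have h4 := P.right
  exact ⟨by linarith, by linarith⟩

lemma TaggedPartition.not_exists {a : ℝ} (P : TaggedPartition a a) : False := by
  have h01 := P.lt 0 P.k_pos
  have := P.t_mono (Nat.one_le_iff_ne_zero.2 (Nat.pos_iff_ne_zero.1 P.k_pos)) (le_refl P.k)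
  have h3 := P.left
  have h4 := P.right
  linarith

lemma exists_partition {a b : ℝ} (hab : a < b) {δ : ℝ} (hδ : 0 < δ) :
    ∃ P : TaggedPartition a b, P.MeshLT δ := by
  obtain ⟨k, hk⟩ : ∃ k : ℕ, (b - a) / δ < k := exists_nat_gt _
  have hk0 : 0 < k := by
    rcases Nat.eq_zero_or_pos k with rfl | h
    · exfalso; simp at hk; nlinarith [div_pos (by linarith : (0 : ℝ) < b - a) hδ]
    · exact h
  have hkR : (0 : ℝ) < k := Nat.cast_pos.2 hk0
  have hstep : (b - a) / k < δ := by
    rw [div_lt_iff₀ hkR]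
    have := (div_lt_iff₀ hδ).1 hk
    linarith
  have hstep0 : (0 : ℝ) < (b - a) / k := div_pos (by linarith) hkR
  refine ⟨⟨k, hk0, fun i => a + i * ((b - a) / k), fun i => a + i * ((b - a) / k), by simp,
    by field_simp; ring, ?_, ?_⟩, ?_⟩
  · intro i _; push_cast; nlinarith
  · intro i _; constructor <;> push_cast <;> nlinarith
  · intro i _
    simp only
    push_cast
    nlinarith

lemma partition_repr {E : Type*} [NormedAddCommGroup E] (ν : E → Set ℝ → ℝ)
    (hν : ∀ z, IsBMeasure (ν z)) (y : ℝ → E) {a b : ℝ} (P : TaggedPartition a b)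
    (r : ℕ → ℝ) (M : ℕ) (hr0 : r 0 = a) (hrM : r M = b)
    (hmono : ∀ m < M, r m < r (m + 1))
    (hsub : ∀ i ≤ P.k, ∃ m ≤ M, r m = P.t i) :
    ∃ I : ℕ → ℕ, (∀ m < M, I m < P.k ∧ P.t (I m) ≤ r m ∧ r (m + 1) ≤ P.t (I m + 1)) ∧
      RiemannSum ν y P
        = ∑ m ∈ Finset.range M, ν (y (P.tag (I m))) (Icc (r m) (r (m + 1))) := by
  classical
  have rle : ∀ u v : ℕ, u ≤ v → v ≤ M → r u ≤ r v := fun u v huv hv =>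
    chain_mono3 r u v huv (fun m _ h2 => (hmono m (lt_of_lt_of_le h2 hv)).le)
  have rlt : ∀ u v : ℕ, u < v → v ≤ M → r u < r v := by
    intro u v huv hv
    rcases Nat.exists_eq_add_of_lt huv with ⟨w, rfl⟩
    calc r u ≤ r (u + w) := rle u (u + w) (Nat.le_add_right u w) (by omega)
      _ < r (u + w + 1) := hmono _ (by omega)
  have rle_rev : ∀ u v : ℕ, u ≤ M → v ≤ M → r u ≤ r v → u ≤ v := by
    intro u v hu hv h
    by_contra hc
    exact absurd h (not_le.2 (rlt v u (not_le.1 hc) hu))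
  set spec : ℕ → ℕ → Prop :=
    fun m i => i < P.k ∧ P.t i ≤ r m ∧ r (m + 1) ≤ P.t (i + 1) with hspec
  have spec_unique : ∀ m < M, ∀ i i', spec m i → spec m i' → i = i' := by
    intro m hm i i' hi hi'
    by_contra hne
    wlog hlt : i < i' generalizing i i'
    · exact this i' i hi' hi (Ne.symm hne) (by omega)
    have h1 : P.t (i + 1) ≤ P.t i' := P.t_mono hlt hi'.1.le
    have h2 := hi.2.2
    have h3 := hi'.2.1
    have h4 := hmono m hm
    linarith
  have spec_ex : ∀ m < M, ∃ i, spec m i := by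
    intro m hm
    set S : Finset ℕ := (Finset.range P.k).filter (fun i => P.t i ≤ r m) with hS
    have h0S : 0 ∈ S := by
      simp only [hS, Finset.mem_filter, Finset.mem_range]
      refine ⟨P.k_pos, ?_⟩
      rw [P.left, ← hr0]
      exact rle 0 m (Nat.zero_le m) hm.le
    have hSne : S.Nonempty := ⟨0, h0S⟩
    set i := S.max' hSne with hi
    have hiS : i ∈ S := S.max'_mem hSne
    have hik : i < P.k := Finset.mem_range.1 (Finset.mem_filter.1 hiS).1
    have hile : P.t i ≤ r m := (Finset.mem_filter.1 hiS).2
    have hnext : r m < P.t (i + 1) := by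
      by_contra hc
      push_neg at hc
      have hik1 : i + 1 < P.k := by
        rcases Nat.lt_or_ge (i + 1) P.k with h | h
        · exact h
        · exfalso
          have : i + 1 = P.k := by omega
          rw [this, P.right, ← hrM] at hc
          exact absurd hc (not_le.2 (rlt m M hm (le_refl M)))
      have : i + 1 ∈ S := by
        simp only [hS, Finset.mem_filter, Finset.mem_range]
        exact ⟨hik1, hc⟩
      have := S.le_max' _ this
      omega
    refine ⟨i, hik, hile, ?_⟩
    obtain ⟨m', hm'M, hm'⟩ := hsub (i + 1) hik
    have : m < m' := by
      by_contra hc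
      push_neg at hc
      have := rle m' m hc hm.le
      rw [hm'] at this
      linarith
    calc r (m + 1) ≤ r m' := rle (m + 1) m' this hm'M
      _ = P.t (i + 1) := hm'
  set I : ℕ → ℕ := fun m => if h : ∃ i, spec m i then h.choose else 0 with hI
  have hIspec : ∀ m < M, spec m (I m) := by
    intro m hm
    have h := spec_ex m hm
    simp only [hI, dif_pos h]
    exact h.choose_spec
  refine ⟨I, fun m hm => hIspec m hm, ?_⟩
  set ψ : ℕ → ℕ := fun i => if h : ∃ m, m ≤ M ∧ r m = P.t i then h.choose else 0 with hψ
  have hψspec : ∀ i ≤ P.k, ψ i ≤ M ∧ r (ψ i) = P.t i := by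
    intro i hi
    have h : ∃ m, m ≤ M ∧ r m = P.t i := by
      obtain ⟨m, h1, h2⟩ := hsub i hi; exact ⟨m, h1, h2⟩
    simp only [hψ, dif_pos h]
    exact h.choose_spec
  have hψmono : ∀ i i', i ≤ i' → i' ≤ P.k → ψ i ≤ ψ i' := by
    intro i i' hii hi'
    obtain ⟨h1, h2⟩ := hψspec i (le_trans hii hi')
    obtain ⟨h3, h4⟩ := hψspec i' hi'
    apply rle_rev _ _ h1 h3
    rw [h2, h4]
    exact P.t_mono hii hi'
  have hψ0 : ψ 0 = 0 := by
    obtain ⟨h1, h2⟩ := hψspec 0 (Nat.zero_le _)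
    have : r (ψ 0) = r 0 := by rw [h2, P.left, hr0]
    have := rle_rev _ _ h1 (Nat.zero_le M) this.le
    omega
  have hψk : ψ P.k = M := by
    obtain ⟨h1, h2⟩ := hψspec P.k (le_refl _)
    have : r M ≤ r (ψ P.k) := by rw [h2, P.right, hrM]
    have := rle_rev _ _ (le_refl M) h1 this
    omega
  have block : ∀ i < P.k,
      ν (y (P.tag i)) (Icc (P.t i) (P.t (i + 1)))
        = ∑ m ∈ Finset.Ico (ψ i) (ψ (i + 1)), ν (y (P.tag i)) (Icc (r m) (r (m + 1))) := by
    intro i hi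
    obtain ⟨hψi, hri⟩ := hψspec i hi.le
    obtain ⟨hψi1, hri1⟩ := hψspec (i + 1) hi
    rw [← hri, ← hri1]
    exact telescope_aux (fun c d => ν (y (P.tag i)) (Icc c d))
      (fun x => (hν _).icc_zero x)
      (fun s t u h1 h2 => (hν _).icc_add h1 h2)
      r (ψ i) (ψ (i + 1)) (hψmono i (i + 1) (Nat.le_succ i) hi)
      (fun m h1 h2 => (hmono m (lt_of_lt_of_le h2 hψi1)).le)
  have hIi : ∀ i < P.k, ∀ m ∈ Finset.Ico (ψ i) (ψ (i + 1)), I m = i := by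
    intro i hi m hm
    rw [Finset.mem_Ico] at hm
    obtain ⟨hψi, hri⟩ := hψspec i hi.le
    obtain ⟨hψi1, hri1⟩ := hψspec (i + 1) hi
    have hmM : m < M := lt_of_lt_of_le hm.2 hψi1
    have hspi : spec m i := by
      refine ⟨hi, ?_, ?_⟩
      · rw [← hri]; exact rle _ _ hm.1 hmM.le
      · rw [← hri1]; exact rle _ _ hm.2 hψi1
    exact spec_unique m hmM _ _ (hIspec m hmM) hspi
  calc RiemannSum ν y P
      = ∑ i ∈ Finset.range P.k, ∑ m ∈ Finset.Ico (ψ i) (ψ (i + 1)),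
          ν (y (P.tag (I m))) (Icc (r m) (r (m + 1))) := by
        apply Finset.sum_congr rfl
        intro i hi
        rw [Finset.mem_range] at hi
        rw [block i hi]
        exact Finset.sum_congr rfl (fun m hm => by rw [hIi i hi m hm])
    _ = ∑ m ∈ Finset.Ico (ψ 0) (ψ P.k), ν (y (P.tag (I m))) (Icc (r m) (r (m + 1))) :=
        sum_concat _ ψ P.k (fun i hi => hψmono i (i + 1) (Nat.le_succ i) hi)
    _ = ∑ m ∈ Finset.range M, ν (y (P.tag (I m))) (Icc (r m) (r (m + 1))) := by
        rw [hψ0, hψk, Finset.range_eq_Ico]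

end AuxiliaryLemmas

lemma merge_chain (P Q : ℕ → ℝ) (kP kQ : ℕ) (a b : ℝ) (hab : a ≤ b)
    (hPa : P 0 = a) (hQa : Q 0 = a)
    (hPmem : ∀ i ≤ kP, P i ∈ Icc a b) (hQmem : ∀ i ≤ kQ, Q i ∈ Icc a b) :
    ∃ (r : ℕ → ℝ) (M : ℕ), r 0 = a ∧ r M = b ∧ (∀ m < M, r m < r (m + 1)) ∧
      (∀ i ≤ kP, ∃ m ≤ M, r m = P i) ∧ (∀ i ≤ kQ, ∃ m ≤ M, r m = Q i) := by
  classical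
  set s : Finset ℝ :=
    insert b (((Finset.range (kP + 1)).image P) ∪ ((Finset.range (kQ + 1)).image Q)) with hs
  have hPs : ∀ i ≤ kP, P i ∈ s := fun i hi =>
    Finset.mem_insert_of_mem (Finset.mem_union_left _
      (Finset.mem_image.2 ⟨i, Finset.mem_range.2 (by omega), rfl⟩))
  have hQs : ∀ i ≤ kQ, Q i ∈ s := fun i hi =>
    Finset.mem_insert_of_mem (Finset.mem_union_right _
      (Finset.mem_image.2 ⟨i, Finset.mem_range.2 (by omega), rfl⟩))
  have has : a ∈ s := hPa ▸ hPs 0 (Nat.zero_le _)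
  have hbs : b ∈ s := Finset.mem_insert_self _ _
  have hssub : ∀ x ∈ s, x ∈ Icc a b := by
    intro x hx
    rcases Finset.mem_insert.1 hx with rfl | hx
    · exact ⟨hab, le_refl _⟩
    rcases Finset.mem_union.1 hx with h | h
    · obtain ⟨i, hi, rfl⟩ := Finset.mem_image.1 h
      exact hPmem i (by have := Finset.mem_range.1 hi; omega)
    · obtain ⟨i, hi, rfl⟩ := Finset.mem_image.1 h
      exact hQmem i (by have := Finset.mem_range.1 hi; omega)
  have hcard : 0 < s.card := Finset.card_pos.2 ⟨a, has⟩
  set e := s.orderIsoOfFin rfl with he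
  set M := s.card - 1 with hM
  have hMcard : M + 1 = s.card := Nat.succ_pred_eq_of_pos hcard
  set r : ℕ → ℝ := fun m => if h : m < s.card then (e ⟨m, h⟩ : ℝ) else 0 with hr
  have hrval : ∀ m (h : m < s.card), r m = (e ⟨m, h⟩ : ℝ) := by
    intro m h; simp only [hr, dif_pos h]
  have hrmem : ∀ m, m < s.card → r m ∈ s := by
    intro m h; rw [hrval m h]; exact (e ⟨m, h⟩).2
  have hrlt : ∀ u v, u < v → v < s.card → r u < r v := by
    intro u v huv hv
    have hu : u < s.card := lt_trans huv hv
    rw [hrval u hu, hrval v hv]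
    exact Subtype.coe_lt_coe.2 (e.strictMono (by exact huv))
  have hrle : ∀ u v, u ≤ v → v < s.card → r u ≤ r v := by
    intro u v huv hv
    rcases eq_or_lt_of_le huv with rfl | h
    · exact le_refl _
    · exact (hrlt u v h hv).le
  have hidx : ∀ x ∈ s, ∃ m ≤ M, r m = x := by
    intro x hx
    refine ⟨(e.symm ⟨x, hx⟩ : Fin s.card), by have := (e.symm ⟨x, hx⟩).isLt; omega, ?_⟩
    rw [hrval _ (e.symm ⟨x, hx⟩).2]
    have : (⟨(e.symm ⟨x, hx⟩ : Fin s.card), (e.symm ⟨x, hx⟩).2⟩ : Fin s.card)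
        = e.symm ⟨x, hx⟩ := by
      apply Fin.ext; rfl
    rw [this, OrderIso.apply_symm_apply]
  have hmono : ∀ m < M, r m < r (m + 1) := fun m hm => hrlt m (m + 1) (Nat.lt_succ_self m) (by omega)
  -- r 0 = a
  obtain ⟨ma, hmaM, hma⟩ := hidx a has
  have hr0 : r 0 = a := by
    have h1 : r 0 ≤ r ma := hrle 0 ma (Nat.zero_le _) (by omega)
    have h2 : a ≤ r 0 := (hssub _ (hrmem 0 hcard)).1
    rw [hma] at h1
    linarith
  obtain ⟨mb, hmbM, hmb⟩ := hidx b hbs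
  have hrM : r M = b := by
    have h1 : r mb ≤ r M := hrle mb M hmbM (by omega)
    have h2 : r M ≤ b := (hssub _ (hrmem M (by omega))).2
    rw [hmb] at h1
    linarith
  exact ⟨r, M, hr0, hrM, hmono, fun i hi => hidx _ (hPs i hi), fun i hi => hidx _ (hQs i hi)⟩


lemma key_estimate {E : Type*} [NormedAddCommGroup E] (ν : E → Set ℝ → ℝ)
    (hν : ∀ z, IsBMeasure (ν z)) (j : ℕ) (ωj : ℝ → ℝ)
    (hωmono : MonotoneOn ωj (Ici 0)) (l : Measure ℝ) (hl : HasLBound ωj ν j l)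
    {a b : ℝ} (hab : a ≤ b) (y : ℝ → E) (hyb : ∀ t ∈ Icc a b, ‖y t‖ ≤ (j : ℝ))
    {δ ρ : ℝ} (hδ : 0 < δ) (hρ : 0 ≤ ρ)
    (huc : ∀ t1 ∈ Icc a b, ∀ t2 ∈ Icc a b, |t1 - t2| ≤ 2 * δ → ‖y t1 - y t2‖ ≤ ρ)
    (P Q : TaggedPartition a b) (hP : P.MeshLT δ) (hQ : Q.MeshLT δ) :
    |RiemannSum ν y P - RiemannSum ν y Q| ≤ ωj ρ * (l (Icc a b)).toReal := by
  obtain ⟨r, M, hr0, hrM, hmono, hsubP, hsubQ⟩ :=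
    merge_chain P.t Q.t P.k Q.k a b hab P.left Q.left
      (fun i hi => P.t_mem hi) (fun i hi => Q.t_mem hi)
  obtain ⟨IP, hIP, hSP⟩ := partition_repr ν hν y P r M hr0 hrM hmono hsubP
  obtain ⟨IQ, hIQ, hSQ⟩ := partition_repr ν hν y Q r M hr0 hrM hmono hsubQ
  have hJsum : (l (Icc a b)).toReal
      = ∑ m ∈ Finset.range M, (l (Icc (r m) (r (m + 1)))).toReal := by
    have := telescope_aux (fun c d => (l (Icc c d)).toReal) (good_zero hl.1)
      (fun s t u h1 h2 => good_add hl.1 h1 h2) r 0 M (Nat.zero_le M)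
      (fun m _ h2 => (hmono m h2).le)
    rw [hr0, hrM] at this
    rw [Finset.range_eq_Ico]
    exact this
  rw [hSP, hSQ, ← Finset.sum_sub_distrib]
  calc |∑ m ∈ Finset.range M, (ν (y (P.tag (IP m))) (Icc (r m) (r (m + 1)))
          - ν (y (Q.tag (IQ m))) (Icc (r m) (r (m + 1))))|
      ≤ ∑ m ∈ Finset.range M, |ν (y (P.tag (IP m))) (Icc (r m) (r (m + 1)))
          - ν (y (Q.tag (IQ m))) (Icc (r m) (r (m + 1)))| :=
        Finset.abs_sum_le_sum_abs _ _
    _ ≤ ∑ m ∈ Finset.range M, ωj ρ * (l (Icc (r m) (r (m + 1)))).toReal := by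
        apply Finset.sum_le_sum
        intro m hm
        rw [Finset.mem_range] at hm
        obtain ⟨hiP, hPl, hPr⟩ := hIP m hm
        obtain ⟨hiQ, hQl, hQr⟩ := hIQ m hm
        have hrm := (hmono m hm).le
        have htagP := P.tag_mem (IP m) hiP
        have htagQ := Q.tag_mem (IQ m) hiQ
        have htPl := (P.t_mem hiP.le).1
        have htPr := (P.t_mem hiP).2
        have htQl := (Q.t_mem hiQ.le).1
        have htQr := (Q.t_mem hiQ).2
        have hτmem : P.tag (IP m) ∈ Icc a b :=
          ⟨le_trans htPl htagP.1, le_trans htagP.2 htPr⟩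
        have hσmem : Q.tag (IQ m) ∈ Icc a b :=
          ⟨le_trans htQl htagQ.1, le_trans htagQ.2 htQr⟩
        have hmeshP := hP (IP m) hiP
        have hmeshQ := hQ (IQ m) hiQ
        have hdist : |P.tag (IP m) - Q.tag (IQ m)| ≤ 2 * δ := by
          have h1 := htagP.1
          have h2 := htagP.2
          have h3 := htagQ.1
          have h4 := htagQ.2
          rw [abs_sub_le_iff]
          constructor <;> linarith
        have hnorm : ‖y (P.tag (IP m)) - y (Q.tag (IQ m))‖ ≤ ρ :=
          huc _ hτmem _ hσmem hdist
        have hωle : ωj ‖y (P.tag (IP m)) - y (Q.tag (IQ m))‖ ≤ ωj ρ :=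
          hωmono (norm_nonneg _) hρ hnorm
        have hbnd := diff_single
          (hl.2 (y (P.tag (IP m))) (y (Q.tag (IQ m))) (hyb _ hτmem) (hyb _ hσmem))
          (Metric.isBounded_Icc (r m) (r (m + 1))) measurableSet_Icc
        exact le_trans hbnd (mul_le_mul_of_nonneg_right hωle ENNReal.toReal_nonneg)
    _ = ωj ρ * (l (Icc a b)).toReal := by rw [← Finset.mul_sum, ← hJsum]


theorem stmt1 {N : ℕ} (ω : ℕ → ℝ → ℝ) (hω : IsModulusFamily ω)
    (ν : EuclideanSpace ℝ (Fin N) → Set ℝ → ℝ) (hν : IsParamBMeasure ω ν)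
    (a b : ℝ) (hab : a ≤ b) (y : ℝ → EuclideanSpace ℝ (Fin N))
    (hy : ContinuousOn y (Set.Icc a b)) :
    ∃ L : ℝ, IsCurveIntegral ν y a b L := by
  rcases eq_or_lt_of_le hab with rfl | hab'
  · exact ⟨0, fun ε hε => ⟨1, one_pos, fun P _ => (P.not_exists).elim⟩⟩
  -- choose a norm bound j for y on [a, b]
  obtain ⟨Cy, hCy⟩ := isCompact_Icc.exists_bound_of_continuousOn hy
  obtain ⟨j₀, hj₀⟩ := exists_nat_ge Cy
  set j := j₀ + 1 with hj
  have hj1 : 1 ≤ j := by omega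
  have hyb : ∀ t ∈ Icc a b, ‖y t‖ ≤ (j : ℝ) := by
    intro t ht
    calc ‖y t‖ ≤ Cy := hCy t ht
      _ ≤ (j₀ : ℝ) := hj₀
      _ ≤ (j : ℝ) := by exact_mod_cast Nat.le_succ j₀
  obtain ⟨m, l, hm, hl⟩ := hν.2 j hj1
  set C := (l (Icc a b)).toReal with hC
  have hC0 : 0 ≤ C := ENNReal.toReal_nonneg
  -- key uniform Cauchy estimate
  have key : ∀ ε : ℝ, 0 < ε → ∃ δ > 0, ∀ P Q : TaggedPartition a b,
      P.MeshLT δ → Q.MeshLT δ → |RiemannSum ν y P - RiemannSum ν y Q| ≤ ε := by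
    intro ε hε
    have hε' : 0 < ε / (C + 1) := by positivity
    have hcont : ContinuousWithinAt (ω j) (Ici 0) 0 := (hω.continuousOn j) 0 (Set.mem_Ici.2 (le_refl 0))
    rw [Metric.continuousWithinAt_iff] at hcont
    obtain ⟨ρ₀, hρ₀, hρ⟩ := hcont _ hε'
    set ρ := ρ₀ / 2 with hρdef
    have hρpos : 0 < ρ := by positivity
    have hωρ : ω j ρ ≤ ε / (C + 1) := by
      have hmem : ρ ∈ Ici (0 : ℝ) := le_of_lt hρpos
      have hd : dist ρ 0 < ρ₀ := by
        rw [Real.dist_eq, sub_zero, abs_of_pos hρpos]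
        simp only [hρdef]
        linarith
      have h := hρ hmem hd
      rw [Real.dist_eq, hω.map_zero j, sub_zero] at h
      calc ω j ρ ≤ |ω j ρ| := le_abs_self _
        _ ≤ ε / (C + 1) := h.le
    have huc0 : UniformContinuousOn y (Icc a b) :=
      isCompact_Icc.uniformContinuousOn_of_continuous hy
    rw [Metric.uniformContinuousOn_iff] at huc0
    obtain ⟨δ', hδ'pos, hδ'uc⟩ := huc0 ρ hρpos
    refine ⟨δ' / 3, by positivity, fun P Q hP hQ => ?_⟩
    have hKE := key_estimate ν hν.1 j (ω j) (hω.monotoneOn j) l hl hab y hyb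
      (show (0 : ℝ) < δ' / 3 by positivity) hρpos.le
      (by
        intro t1 h1 t2 h2 hle
        have := hδ'uc t1 h1 t2 h2 (by rw [Real.dist_eq]; linarith)
        rw [dist_eq_norm] at this
        exact this.le) P Q hP hQ
    calc |RiemannSum ν y P - RiemannSum ν y Q| ≤ ω j ρ * C := hKE
      _ ≤ (ε / (C + 1)) * C := mul_le_mul_of_nonneg_right hωρ hC0
      _ ≤ ε := by
          rw [div_mul_eq_mul_div, div_le_iff₀ (by positivity)]
          nlinarith
  -- a sequence of Riemann sums
  choose δf hδfpos hδfspec using fun n : ℕ => key (1 / ((n : ℝ) + 1)) (by positivity)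
  have hne : ∀ n : ℕ, ((Finset.range (n + 1)).image δf).Nonempty :=
    fun n => Finset.Nonempty.image ⟨0, Finset.mem_range.2 (Nat.succ_pos n)⟩ _
  set d : ℕ → ℝ :=
    fun n => min (1 / ((n : ℝ) + 1)) (((Finset.range (n + 1)).image δf).min' (hne n)) with hd
  have hd_pos : ∀ n, 0 < d n := by
    intro n
    apply lt_min (by positivity)
    obtain ⟨i, _, hi⟩ := Finset.mem_image.1 (Finset.min'_mem _ (hne n))
    rw [← hi]
    exact hδfpos i
  have hd_le_inv : ∀ n, d n ≤ 1 / ((n : ℝ) + 1) := fun n => min_le_left _ _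
  have hd_le_δf : ∀ i n, i ≤ n → d n ≤ δf i := by
    intro i n hin
    exact le_trans (min_le_right _ _)
      (Finset.min'_le _ _ (Finset.mem_image.2 ⟨i, Finset.mem_range.2 (by omega), rfl⟩))
  choose Pn hPn using fun n : ℕ => exists_partition hab' (hd_pos n)
  set u : ℕ → ℝ := fun n => RiemannSum ν y (Pn n) with hu
  have hinv_lt : ∀ {N n : ℕ} {δ : ℝ}, N ≤ n → 1 / ((N : ℝ) + 1) < δ → d n < δ := by
    intro N n δ hNn hNδ
    calc d n ≤ 1 / ((n : ℝ) + 1) := hd_le_inv n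
      _ ≤ 1 / ((N : ℝ) + 1) :=
        one_div_le_one_div_of_le (by positivity) (by exact_mod_cast Nat.succ_le_succ hNn)
      _ < δ := hNδ
  have hcauchy : CauchySeq u := by
    rw [Metric.cauchySeq_iff']
    intro ε hε
    obtain ⟨δ, hδpos, hδ⟩ := key (ε / 2) (by positivity)
    obtain ⟨N, hN⟩ := exists_nat_one_div_lt hδpos
    refine ⟨N, fun n hn => ?_⟩
    have h1 : (Pn n).MeshLT δ := fun i hi => lt_trans (hPn n i hi) (hinv_lt hn hN)
    have h2 : (Pn N).MeshLT δ := fun i hi => lt_trans (hPn N i hi) (hinv_lt (le_refl N) hN)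
    rw [Real.dist_eq]
    calc |u n - u N| ≤ ε / 2 := hδ (Pn n) (Pn N) h1 h2
      _ < ε := by linarith
  obtain ⟨L, hL⟩ := cauchySeq_tendsto_of_complete hcauchy
  refine ⟨L, fun ε hε => ?_⟩
  obtain ⟨δ, hδpos, hδ⟩ := key (ε / 2) (by positivity)
  refine ⟨δ, hδpos, fun P hP => ?_⟩
  rw [Metric.tendsto_atTop] at hL
  obtain ⟨N1, hN1⟩ := hL (ε / 4) (by positivity)
  obtain ⟨N2, hN2⟩ := exists_nat_one_div_lt hδpos
  set n := max N1 N2 with hn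
  have hmesh : (Pn n).MeshLT δ :=
    fun i hi => lt_trans (hPn n i hi) (hinv_lt (le_max_right N1 N2) hN2)
  have h1 : |L - u n| < ε / 4 := by
    have := hN1 n (le_max_left N1 N2)
    rw [Real.dist_eq] at this
    rw [abs_sub_comm]
    exact this
  have h2 : |u n - RiemannSum ν y P| ≤ ε / 2 := hδ (Pn n) P hmesh hP
  calc |L - RiemannSum ν y P|
      ≤ |L - u n| + |u n - RiemannSum ν y P| := abs_sub_le L (u n) _
    _ < ε := by linarith
end

section
/- Let μ⁺ and μ⁻ be locally finite atomless Borel measures on ℝ and let ν₀ be the b-measure ν₀(A) = μ⁺(A) − μ⁻(A) for bounded Borel A; suppose |ν₀| ≤ m₀ for some locally finite atomless Borel measure m₀. Let φ : ℝ^N → [0,1] be of class C¹ with compact support, let ν* be the parametric b-measure y ↦ φ(y)ν₀, and let y : [a,b] → ℝ^N be continuous. Then ν* is integrable along y and ∫_a^b dν*_{y(s)} = ∫_{[a,b]} φ(y(s)) dμ⁺(s) − ∫_{[a,b]} φ(y(s)) dμ⁻(s), where the right-hand integrals are Lebesgue integrals. -/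
open MeasureTheory Set Filter Topology

variable {E : Type*} [NormedAddCommGroup E]

lemma telescope_int (μ : Measure ℝ) (g : ℝ → ℝ) (t : ℕ → ℝ) (k : ℕ)
    (hmono : ∀ i j, i ≤ j → j ≤ k → t i ≤ t j)
    (hInt : IntegrableOn g (Set.Ioc (t 0) (t k)) μ) :
    ∫ s in Set.Ioc (t 0) (t k), g s ∂μ
      = ∑ i ∈ Finset.range k, ∫ s in Set.Ioc (t i) (t (i+1)), g s ∂μ := by
  suffices h : ∀ n ≤ k, ∫ s in Set.Ioc (t 0) (t n), g s ∂μ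
      = ∑ i ∈ Finset.range n, ∫ s in Set.Ioc (t i) (t (i+1)), g s ∂μ from h k le_rfl
  intro n hn
  induction n with
  | zero => simp
  | succ m ih =>
    have hm : m ≤ k := Nat.le_of_succ_le hn
    have h0m : t 0 ≤ t m := hmono 0 m (Nat.zero_le _) hm
    have hmm : t m ≤ t (m+1) := hmono m (m+1) (Nat.le_succ _) hn
    have hsub1 : Set.Ioc (t 0) (t m) ⊆ Set.Ioc (t 0) (t k) :=
      Set.Ioc_subset_Ioc le_rfl (hmono m k hm le_rfl)
    have hsub2 : Set.Ioc (t m) (t (m+1)) ⊆ Set.Ioc (t 0) (t k) :=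
      Set.Ioc_subset_Ioc h0m (hmono (m+1) k hn le_rfl)
    have hu : Set.Ioc (t 0) (t m) ∪ Set.Ioc (t m) (t (m+1)) = Set.Ioc (t 0) (t (m+1)) :=
      Set.Ioc_union_Ioc_eq_Ioc h0m hmm
    rw [← hu, MeasureTheory.setIntegral_union (Set.Ioc_disjoint_Ioc_of_le le_rfl) measurableSet_Ioc
      (hInt.mono_set hsub1) (hInt.mono_set hsub2), ih hm, Finset.sum_range_succ]

lemma riemann_conv (μ : Measure ℝ) (hμ : GoodMeasure μ) (a b : ℝ) (hab : a ≤ b)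
    (g : ℝ → ℝ) (hg : ContinuousOn g (Set.Icc a b)) (ε : ℝ) (hε : 0 < ε) :
    ∃ δ > 0, ∀ P : TaggedPartition a b, P.MeshLT δ →
      |(∫ s in Set.Icc a b, g s ∂μ)
        - ∑ i ∈ Finset.range P.k, g (P.tag i) * (μ (Set.Icc (P.t i) (P.t (i+1)))).toReal| < ε := by
  haveI := hμ.1
  haveI : NullSingletonClass μ := ⟨hμ.2⟩
  have hfin : μ (Set.Icc a b) < ⊤ := isCompact_Icc.measure_lt_top
  set C : ℝ := (μ (Set.Icc a b)).toReal + 1 with hC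
  have hC0 : 0 < C := by positivity
  have hε' : 0 < ε / C := div_pos hε hC0
  have hunif : UniformContinuousOn g (Set.Icc a b) :=
    isCompact_Icc.uniformContinuousOn_of_continuous hg
  rw [Metric.uniformContinuousOn_iff] at hunif
  obtain ⟨δ, hδ0, hδ⟩ := hunif (ε / C) hε'
  refine ⟨δ, hδ0, fun P hP => ?_⟩
  have hmono : ∀ i j, i ≤ j → j ≤ P.k → P.t i ≤ P.t j := by
    intro i j hij hjk
    induction j with
    | zero => simp_all
    | succ m ih =>
      rcases Nat.eq_or_lt_of_le hij with h | h
      · simp [h]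
      · exact le_trans (ih (Nat.lt_succ_iff.mp h) (Nat.le_of_succ_le hjk))
          (le_of_lt (P.lt m hjk))
  have hmem : ∀ i ≤ P.k, P.t i ∈ Set.Icc a b := by
    intro i hi
    have h1 := hmono 0 i (Nat.zero_le _) hi
    have h2 := hmono i P.k hi le_rfl
    rw [P.left] at h1; rw [P.right] at h2
    exact ⟨h1, h2⟩
  have hIcc_sub : ∀ i < P.k, Set.Ioc (P.t i) (P.t (i+1)) ⊆ Set.Icc a b := by
    intro i hi
    exact fun s hs => ⟨le_trans (hmem i hi.le).1 hs.1.le, le_trans hs.2 (hmem (i+1) hi).2⟩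
  have hInt : IntegrableOn g (Set.Icc a b) μ := hg.integrableOn_Icc
  have hsub0 : Set.Ioc (P.t 0) (P.t P.k) ⊆ Set.Icc a b := by
    rw [P.left, P.right]; exact Set.Ioc_subset_Icc_self
  -- rewrite Icc integral / measures as Ioc
  have hIeq : ∫ s in Set.Icc a b, g s ∂μ = ∫ s in Set.Ioc a b, g s ∂μ :=
    integral_Icc_eq_integral_Ioc
  have hmeq : ∀ c d : ℝ, μ (Set.Icc c d) = μ (Set.Ioc c d) := by
    intro c d; exact (measure_congr (MeasureTheory.Ioc_ae_eq_Icc (μ := μ) (a := c) (b := d))).symm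
  have htel := telescope_int μ g P.t P.k hmono (hInt.mono_set hsub0)
  rw [P.left, P.right] at htel
  -- measure telescope via constant 1
  have htel1 := telescope_int μ (fun _ => (1:ℝ)) P.t P.k hmono
    (integrableOn_const (lt_of_le_of_lt (measure_mono hsub0) hfin).ne)
  simp only [MeasureTheory.setIntegral_const, smul_eq_mul, mul_one] at htel1
  rw [P.left, P.right] at htel1
  -- per-term bound
  have hterm : ∀ i < P.k,
      |(∫ s in Set.Ioc (P.t i) (P.t (i+1)), g s ∂μ)
        - g (P.tag i) * (μ (Set.Ioc (P.t i) (P.t (i+1)))).toReal|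
      ≤ (ε / C) * (μ (Set.Ioc (P.t i) (P.t (i+1)))).toReal := by
    intro i hi
    set I := Set.Ioc (P.t i) (P.t (i+1)) with hI
    have hIfin : μ I < ⊤ := lt_of_le_of_lt (measure_mono (hIcc_sub i hi)) hfin
    have hgI : IntegrableOn g I μ := hInt.mono_set (hIcc_sub i hi)
    have hconst : IntegrableOn (fun _ => g (P.tag i)) I μ :=
      integrableOn_const hIfin.ne
    have heq : (∫ s in I, (g s - g (P.tag i)) ∂μ)
        = (∫ s in I, g s ∂μ) - g (P.tag i) * (μ I).toReal := by
      rw [MeasureTheory.integral_sub hgI hconst, MeasureTheory.setIntegral_const,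
        smul_eq_mul, mul_comm, measureReal_def]
    have htag := P.tag_mem i hi
    have hbound : ∀ s ∈ I, ‖g s - g (P.tag i)‖ ≤ ε / C := by
      intro s hs
      have hsmem : s ∈ Set.Icc a b := hIcc_sub i hi hs
      have htagmem : P.tag i ∈ Set.Icc a b :=
        ⟨le_trans (hmem i hi.le).1 htag.1, le_trans htag.2 (hmem (i+1) hi).2⟩
      have hdist : dist s (P.tag i) < δ := by
        rw [Real.dist_eq]
        have h1 := htag.1; have h2 := htag.2
        have := hP i hi
        have habs : |s - P.tag i| ≤ P.t (i+1) - P.t i := by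
          rw [abs_sub_le_iff]; constructor <;> [skip; skip] <;>
            · have := hs.1.le; have := hs.2; linarith
        linarith
      exact le_of_lt (hδ s hsmem (P.tag i) htagmem hdist)
    calc |(∫ s in I, g s ∂μ) - g (P.tag i) * (μ I).toReal|
        = ‖∫ s in I, (g s - g (P.tag i)) ∂μ‖ := by rw [heq, Real.norm_eq_abs]
      _ ≤ (ε / C) * (μ I).toReal :=
          MeasureTheory.norm_setIntegral_le_of_norm_le_const hIfin hbound
  -- assemble
  have hdiff : (∫ s in Set.Icc a b, g s ∂μ)
      - ∑ i ∈ Finset.range P.k, g (P.tag i) * (μ (Set.Icc (P.t i) (P.t (i+1)))).toReal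
      = ∑ i ∈ Finset.range P.k,
        ((∫ s in Set.Ioc (P.t i) (P.t (i+1)), g s ∂μ)
          - g (P.tag i) * (μ (Set.Ioc (P.t i) (P.t (i+1)))).toReal) := by
    rw [hIeq, htel, Finset.sum_sub_distrib]
    congr 1
    exact Finset.sum_congr rfl fun i _ => by rw [hmeq]
  rw [hdiff]
  calc |∑ i ∈ Finset.range P.k, _| ≤ ∑ i ∈ Finset.range P.k,
        |(∫ s in Set.Ioc (P.t i) (P.t (i+1)), g s ∂μ)
          - g (P.tag i) * (μ (Set.Ioc (P.t i) (P.t (i+1)))).toReal| :=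
        Finset.abs_sum_le_sum_abs _ _
    _ ≤ ∑ i ∈ Finset.range P.k, (ε / C) * (μ (Set.Ioc (P.t i) (P.t (i+1)))).toReal :=
        Finset.sum_le_sum fun i hi => hterm i (Finset.mem_range.mp hi)
    _ = (ε / C) * ∑ i ∈ Finset.range P.k, (μ (Set.Ioc (P.t i) (P.t (i+1)))).toReal := by
        rw [Finset.mul_sum]
    _ = (ε / C) * (μ (Set.Ioc a b)).toReal := by simp only [measureReal_def] at htel1; rw [htel1]
    _ ≤ (ε / C) * (μ (Set.Icc a b)).toReal := by
        exact mul_le_mul_of_nonneg_left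
          (ENNReal.toReal_mono hfin.ne (measure_mono Set.Ioc_subset_Icc_self)) hε'.le
    _ < ε := by
        rw [div_mul_eq_mul_div, div_lt_iff₀ hC0]
        nlinarith [ENNReal.toReal_nonneg (a := μ (Set.Icc a b))]

theorem stmt3 {N : ℕ} (μp μm : Measure ℝ) (hμp : GoodMeasure μp) (hμm : GoodMeasure μm)
    (m₀ : Measure ℝ) (hm₀ : GoodMeasure m₀)
    (hTV : TVLE (fun A => (μp A).toReal - (μm A).toReal) m₀)
    (φ : EuclideanSpace ℝ (Fin N) → ℝ)
    (hφ01 : ∀ y, φ y ∈ Set.Icc (0 : ℝ) 1)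
    (hφC1 : ContDiff ℝ 1 φ) (hφsupp : HasCompactSupport φ)
    (a b : ℝ) (hab : a ≤ b) (y : ℝ → EuclideanSpace ℝ (Fin N))
    (hy : ContinuousOn y (Set.Icc a b)) :
    IsCurveIntegral (fun z A => φ z * ((μp A).toReal - (μm A).toReal)) y a b
      ((∫ s in Set.Icc a b, φ (y s) ∂μp) - ∫ s in Set.Icc a b, φ (y s) ∂μm) := by
  intro ε hε
  have hg : ContinuousOn (fun s => φ (y s)) (Set.Icc a b) :=
    hφC1.continuous.comp_continuousOn hy
  obtain ⟨δ₁, hδ₁, h1⟩ := riemann_conv μp hμp a b hab _ hg (ε/2) (by positivity)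
  obtain ⟨δ₂, hδ₂, h2⟩ := riemann_conv μm hμm a b hab _ hg (ε/2) (by positivity)
  refine ⟨min δ₁ δ₂, lt_min hδ₁ hδ₂, fun P hP => ?_⟩
  have h1' := h1 P (fun i hi => lt_of_lt_of_le (hP i hi) (min_le_left _ _))
  have h2' := h2 P (fun i hi => lt_of_lt_of_le (hP i hi) (min_le_right _ _))
  have hRS : RiemannSum (fun z A => φ z * ((μp A).toReal - (μm A).toReal)) y P
      = (∑ i ∈ Finset.range P.k, φ (y (P.tag i)) * (μp (Set.Icc (P.t i) (P.t (i+1)))).toReal)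
        - ∑ i ∈ Finset.range P.k, φ (y (P.tag i)) * (μm (Set.Icc (P.t i) (P.t (i+1)))).toReal := by
    simp only [RiemannSum, mul_sub, Finset.sum_sub_distrib]
  rw [hRS]
  rw [abs_lt] at h1' h2' ⊢
  constructor <;> [linarith [h1'.1, h2'.2]; linarith [h1'.2, h2'.1]]
end
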